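/- Fix n ≥ 2, a player index i, samples x^{(1)},…,x^{(m)} ∈ {−1,+1}^n, and constants c^{(1)},…,c^{(m)} ≥ 0. Define the hinge training loss ℓ̂(w,b) = (1/m)·∑_l max( c^{(l)}, 1 − x_i^{(l)}·(wᵀ x_{−i}^{(l)} − b) ) for w ∈ ℝ^{n−1}, b ∈ ℝ. Then (w,b) = (0,0) is a global minimizer of ℓ̂ if and only if there exist u^{(1)},…,u^{(m)} with u^{(l)} = 0 whenever c^{(l)} > 1, u^{(l)} = 1 whenever c^{(l)} < 1, and u^{(l)} ∈ [0,1] whenever c^{(l)} = 1, such that for every j ≠ i, ∑_l 1[x_i^{(l)} x_j^{(l)} = 1]·u^{(l)} = ∑_l 1[x_i^{(l)} x_j^{(l)} = −1]·u^{(l)}, and ∑_l 1[x_i^{(l)} = 1]·u^{(l)} = ∑_l 1[x_i^{(l)} = −1]·u^{(l)}. -/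

import Mathlib

open Finset
open scoped Classical BigOperators

lemma aux_key (c u t : ℝ) (h0 : 1 < c → u = 0) (h1 : c < 1 → u = 1)
    (h2 : c = 1 → 0 ≤ u ∧ u ≤ 1) : max c 1 - u * t ≤ max c (1 - t) := by
  rcases lt_trichotomy c 1 with h | h | h
  · rw [h1 h, max_eq_right h.le, one_mul]
    exact le_max_right _ _
  · obtain ⟨hu0, hu1⟩ := h2 h
    subst h
    rcases le_or_gt 0 t with ht | ht
    · have : 0 ≤ u * t := mul_nonneg hu0 ht
      have := le_max_left (1:ℝ) (1 - t)
      simp only [max_self]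
      linarith
    · have : u * t ≥ 1 * t := mul_le_mul_of_nonpos_right hu1 ht.le
      have := le_max_right (1:ℝ) (1 - t)
      simp only [max_self]
      linarith
  · rw [h0 h, max_eq_left h.le, zero_mul, sub_zero]
    exact le_max_left _ _

lemma sum_ind {m : ℕ} (a u : Fin m → ℝ) (ha : ∀ l, a l = 1 ∨ a l = -1)
    (h : ∑ l, a l * u l = 0) :
    ∑ l, (if a l = 1 then (1:ℝ) else 0) * u l =
      ∑ l, (if a l = -1 then (1:ℝ) else 0) * u l := by
  have key : ∀ l ∈ (univ : Finset (Fin m)),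
      (if a l = 1 then (1:ℝ) else 0) * u l - (if a l = -1 then (1:ℝ) else 0) * u l
        = a l * u l := by
    intro l _
    rcases ha l with h' | h' <;> rw [h'] <;> norm_num
  rw [← sub_eq_zero, ← Finset.sum_sub_distrib, Finset.sum_congr rfl key, h]

lemma split_sum {m : ℕ} (c : Fin m → ℝ) {M : Type*} [AddCommMonoid M] (F G : Fin m → M) :
    ∑ l, (if c l < 1 then F l else if c l = 1 then G l else 0) =
      ∑ l ∈ univ.filter (fun l => c l < 1), F l +
        ∑ l ∈ univ.filter (fun l => c l = 1), G l := by
  rw [Finset.sum_ite, ← Finset.sum_filter, Finset.filter_filter]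
  congr 1
  apply Finset.sum_congr _ (fun _ _ => rfl)
  ext l
  simp only [Finset.mem_filter, Finset.mem_univ, true_and]
  constructor
  · rintro ⟨-, h⟩; exact h
  · intro h; exact ⟨by rw [h]; exact lt_irrefl 1, h⟩


lemma stepA {m : ℕ} (hm : 0 < m) (c : Fin m → ℝ) (D : Fin m → ℝ)
    (hmin : ∀ ε : ℝ, 0 < ε → ∑ l, max (c l) 1 ≤ ∑ l, max (c l) (1 - ε * D l)) :
    0 ≤ ∑ l, (if c l < 1 then -(D l) else if c l = 1 then max 0 (-(D l)) else 0) := by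
  classical
  set δ : Fin m → ℝ := fun l => if c l = 1 then 1 else |1 - c l| / (|D l| + 1) with hδdef
  have hδpos : ∀ l, 0 < δ l := by
    intro l
    rw [hδdef]
    dsimp only
    split
    · norm_num
    · next h => exact div_pos (abs_pos.mpr (sub_ne_zero.mpr fun h' => h h'.symm)) (by positivity)
  have hne : (univ : Finset (Fin m)).Nonempty := ⟨⟨0, hm⟩, mem_univ _⟩
  set ε : ℝ := univ.inf' hne δ with hε
  have hεpos : 0 < ε := (Finset.lt_inf'_iff hne).mpr fun l _ => hδpos l
  have hεle : ∀ l, ε ≤ δ l := fun l => Finset.inf'_le _ (mem_univ l)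
  have habs : ∀ l, c l ≠ 1 → ε * |D l| < |1 - c l| := by
    intro l h
    have h1 : ε ≤ |1 - c l| / (|D l| + 1) := by
      have h' := hεle l
      rw [hδdef] at h'
      dsimp only at h'
      rwa [if_neg h] at h'
    have h2 : ε * |D l| ≤ (|1 - c l| / (|D l| + 1)) * |D l| :=
      mul_le_mul_of_nonneg_right h1 (abs_nonneg _)
    have h3 : (|1 - c l| / (|D l| + 1)) * |D l| < |1 - c l| := by
      rw [div_mul_eq_mul_div, div_lt_iff₀ (by positivity)]
      have h4 : 0 < |1 - c l| := abs_pos.mpr (sub_ne_zero.mpr fun h' => h h'.symm)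
      nlinarith [abs_nonneg (D l)]
    linarith
  have key : ∀ l ∈ (univ : Finset (Fin m)), max (c l) (1 - ε * D l) =
      max (c l) 1 + ε * (if c l < 1 then -(D l) else if c l = 1 then max 0 (-(D l)) else 0) := by
    intro l _
    rcases lt_trichotomy (c l) 1 with hcl | hcl | hcl
    · have hne1 : c l ≠ 1 := ne_of_lt hcl
      have h6 : ε * D l < 1 - c l := by
        have h4 : ε * D l ≤ ε * |D l| := mul_le_mul_of_nonneg_left (le_abs_self _) hεpos.le
        have h5 : |1 - c l| = 1 - c l := abs_of_pos (by linarith)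
        have := habs l hne1
        linarith
      rw [if_pos hcl, max_eq_right hcl.le, max_eq_right (by linarith : c l ≤ 1 - ε * D l)]
      ring
    · rw [if_neg (by rw [hcl]; exact lt_irrefl 1), if_pos hcl, hcl, max_self]
      rcases le_or_gt 0 (D l) with hD | hD
      · rw [max_eq_left (by nlinarith : 1 - ε * D l ≤ 1), max_eq_left (by linarith : -(D l) ≤ 0)]
        ring
      · rw [max_eq_right (by nlinarith : (1:ℝ) ≤ 1 - ε * D l),
          max_eq_right (by linarith : (0:ℝ) ≤ -(D l))]
        ring
    · have hne1 : c l ≠ 1 := ne_of_gt hcl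
      have h6 : -(ε * D l) < c l - 1 := by
        have h4 : ε * -(D l) ≤ ε * |D l| := mul_le_mul_of_nonneg_left (neg_le_abs _) hεpos.le
        have h5 : |1 - c l| = c l - 1 := by rw [abs_of_neg (by linarith : 1 - c l < 0)]; ring
        have := habs l hne1
        nlinarith
      rw [if_neg (not_lt.mpr hcl.le), if_neg hne1, mul_zero, add_zero,
        max_eq_left (by linarith : 1 - ε * D l ≤ c l), max_eq_left hcl.le]
  have hstep := hmin ε hεpos
  rw [Finset.sum_congr rfl key, Finset.sum_add_distrib, ← Finset.mul_sum] at hstep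
  have h7 : 0 ≤ ε * ∑ l, (if c l < 1 then -(D l) else if c l = 1 then max 0 (-(D l)) else 0) := by
    linarith
  exact nonneg_of_mul_nonneg_right h7 hεpos

noncomputable def auxφ {m : ℕ} {V : Type*} [AddCommGroup V] [Module ℝ V]
    (c : Fin m → ℝ) (z : Fin m → V) : (Fin m → ℝ) →ₗ[ℝ] V where
  toFun v := ∑ l ∈ Finset.univ.filter (fun l => c l = 1), v l • z l
  map_add' v₁ v₂ := by simp [add_smul, Finset.sum_add_distrib]
  map_smul' r v := by simp [Finset.smul_sum, mul_smul]

lemma farkas {m : ℕ} {V : Type*} [NormedAddCommGroup V] [NormedSpace ℝ V]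
    (c : Fin m → ℝ) (z : Fin m → V)
    (hdir : ∀ f : V →L[ℝ] ℝ,
      0 ≤ ∑ l ∈ univ.filter (fun l => c l < 1), f (z l) +
          ∑ l ∈ univ.filter (fun l => c l = 1), max 0 (f (z l))) :
    ∃ uu : Fin m → ℝ, (∀ l, 0 ≤ uu l ∧ uu l ≤ 1) ∧
      ∑ l ∈ univ.filter (fun l => c l < 1), z l +
        ∑ l ∈ univ.filter (fun l => c l = 1), uu l • z l = 0 := by
  classical
  set φ := auxφ c z with hφdef
  set K : Set (Fin m → ℝ) := Set.univ.pi fun _ => Set.Icc (0:ℝ) 1 with hKdef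
  have hq : (-∑ l ∈ univ.filter (fun l => c l < 1), z l) ∈ φ '' K := by
    by_contra hq
    obtain ⟨f, r, hfZ, hfq⟩ := geometric_hahn_banach_closed_point
      ((convex_pi fun _ _ => convex_Icc 0 1).linear_image φ)
      (((isCompact_univ_pi fun _ => isCompact_Icc).image
        φ.continuous_of_finiteDimensional).isClosed) hq
    set uu : Fin m → ℝ := fun l => if 0 < f (z l) then 1 else 0 with huudef
    have huuK : uu ∈ K := by
      intro l _
      rw [huudef]
      dsimp only
      split <;> exact ⟨by norm_num, by norm_num⟩
    have h1 := hfZ _ ⟨uu, huuK, rfl⟩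
    have hφuu : f (φ uu) = ∑ l ∈ univ.filter (fun l => c l = 1), max 0 (f (z l)) := by
      have h2 : φ uu = ∑ l ∈ univ.filter (fun l => c l = 1), uu l • z l := rfl
      rw [h2, map_sum]
      apply Finset.sum_congr rfl
      intro l _
      rw [map_smul, smul_eq_mul, huudef]
      dsimp only
      split
      · next h => rw [one_mul, max_eq_right h.le]
      · next h => rw [zero_mul, max_eq_left (not_lt.mp h)]
    rw [map_neg, map_sum] at hfq
    have := hdir f
    rw [hφuu] at h1
    linarith
  obtain ⟨uu, huuK, hφuu⟩ := hq
  refine ⟨uu, fun l => huuK l (Set.mem_univ l), ?_⟩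
  have h2 : φ uu = ∑ l ∈ univ.filter (fun l => c l = 1), uu l • z l := rfl
  rw [← h2, hφuu]
  simp

/-- The hinge training loss
`ℓ̂(w,b) = (1/m) ∑_l max(c^{(l)}, 1 − x_i^{(l)}(wᵀ x_{−i}^{(l)} − b))`, where the weight
vector `w ∈ ℝ^{n−1}` is indexed by the players `j ≠ i`. -/
noncomputable def hingeObj (n m : ℕ) (i : Fin n) (xs : Fin m → Fin n → ℝ) (c : Fin m → ℝ)
    (w : {j : Fin n // j ≠ i} → ℝ) (b : ℝ) : ℝ :=
  (1 / (m : ℝ)) *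
    ∑ l, max (c l) (1 - xs l i * ((∑ j : {j : Fin n // j ≠ i}, w j * xs l (j : Fin n)) - b))

/-- `(w,b) = (0,0)` is a global minimizer of the hinge training loss iff
there exist `u^{(l)}` (with `u = 0` if `c > 1`, `u = 1` if `c < 1`, `u ∈ [0,1]` if `c = 1`)
balancing the (weighted) agreement/disagreement counts for every `j ≠ i` and for the bias. -/
theorem stmt10 (n m : ℕ) (hn : 2 ≤ n) (i : Fin n)
    (xs : Fin m → Fin n → ℝ) (hxs : ∀ l j, xs l j = 1 ∨ xs l j = -1)
    (c : Fin m → ℝ) (hc : ∀ l, 0 ≤ c l) :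
    (∀ (w : {j : Fin n // j ≠ i} → ℝ) (b : ℝ),
        hingeObj n m i xs c 0 0 ≤ hingeObj n m i xs c w b) ↔
      ∃ u : Fin m → ℝ,
        (∀ l, 1 < c l → u l = 0) ∧
        (∀ l, c l < 1 → u l = 1) ∧
        (∀ l, c l = 1 → 0 ≤ u l ∧ u l ≤ 1) ∧
        (∀ j : Fin n, j ≠ i →
          ∑ l, (if xs l i * xs l j = 1 then (1 : ℝ) else 0) * u l =
            ∑ l, (if xs l i * xs l j = -1 then (1 : ℝ) else 0) * u l) ∧
        (∑ l, (if xs l i = 1 then (1 : ℝ) else 0) * u l =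
          ∑ l, (if xs l i = -1 then (1 : ℝ) else 0) * u l) := by
  have hprod : ∀ l (j : Fin n), xs l i * xs l j = 1 ∨ xs l i * xs l j = -1 := by
    intro l j
    rcases hxs l i with h | h <;> rcases hxs l j with h' | h' <;> rw [h, h'] <;> norm_num
  constructor
  · intro hmin
    by_cases hm : m = 0
    · subst hm
      exact ⟨0, fun l => l.elim0, fun l => l.elim0, fun l => l.elim0,
        fun j _ => by simp, by simp⟩
    · have hm' : 0 < m := Nat.pos_of_ne_zero hm
      have hdirwb : ∀ (w : {j : Fin n // j ≠ i} → ℝ) (b : ℝ),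
          0 ≤ ∑ l, (if c l < 1 then
                -(xs l i * ((∑ j : {j : Fin n // j ≠ i}, w j * xs l (j : Fin n)) - b))
              else if c l = 1 then
                max 0 (-(xs l i * ((∑ j : {j : Fin n // j ≠ i}, w j * xs l (j : Fin n)) - b)))
              else 0) := by
        intro w b
        apply stepA hm' c
        intro ε hε
        have h' := hmin (fun j => ε * w j) (ε * b)
        unfold hingeObj at h'
        have hpos : (0:ℝ) < 1 / (m:ℝ) := by positivity
        have h'' := (mul_le_mul_iff_right₀ hpos).mp h'
        calc ∑ l, max (c l) 1
            = ∑ l, max (c l) (1 - xs l i *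
                ((∑ j : {j : Fin n // j ≠ i},
                  (0 : {j : Fin n // j ≠ i} → ℝ) j * xs l (j : Fin n)) - 0)) := by
              apply Finset.sum_congr rfl
              intro l _
              simp
          _ ≤ ∑ l, max (c l) (1 - xs l i *
                ((∑ j : {j : Fin n // j ≠ i},
                  (fun j => ε * w j) j * xs l (j : Fin n)) - ε * b)) := h''
          _ = ∑ l, max (c l) (1 - ε * (xs l i *
                ((∑ j : {j : Fin n // j ≠ i}, w j * xs l (j : Fin n)) - b))) := by
              apply Finset.sum_congr rfl
              intro l _
              congr 1
              have he : (∑ j : {j : Fin n // j ≠ i}, (fun j => ε * w j) j * xs l (j : Fin n))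
                  = ε * ∑ j : {j : Fin n // j ≠ i}, w j * xs l (j : Fin n) := by
                rw [Finset.mul_sum]
                exact Finset.sum_congr rfl fun j _ => by ring
              rw [he]
              ring
      have hdirf : ∀ f : (({j : Fin n // j ≠ i} → ℝ) × ℝ) →L[ℝ] ℝ,
          0 ≤ ∑ l ∈ univ.filter (fun l => c l < 1),
                f (fun j => xs l i * xs l (j : Fin n), -(xs l i)) +
              ∑ l ∈ univ.filter (fun l => c l = 1),
                max 0 (f (fun j => xs l i * xs l (j : Fin n), -(xs l i))) := by
        intro f
        have frep : ∀ l, f (fun j => xs l i * xs l (j : Fin n), -(xs l i)) =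
            xs l i * ((∑ j : {j : Fin n // j ≠ i},
              f (Pi.single j 1, 0) * xs l (j : Fin n)) - f ((0 : {j : Fin n // j ≠ i} → ℝ), 1)) := by
          intro l
          have hdecomp : ((fun j => xs l i * xs l (j : Fin n), -(xs l i)) :
              ({j : Fin n // j ≠ i} → ℝ) × ℝ) =
              (∑ j : {j : Fin n // j ≠ i}, (xs l i * xs l (j : Fin n)) •
                ((Pi.single j 1 : {j : Fin n // j ≠ i} → ℝ), (0:ℝ))) +
              (-(xs l i)) • ((0 : {j : Fin n // j ≠ i} → ℝ), (1:ℝ)) := by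
            apply Prod.ext
            · simp only [Prod.fst_add, Prod.fst_sum, Prod.smul_fst, smul_zero, add_zero]
              have hsing : ∀ j : {j : Fin n // j ≠ i},
                  (xs l i * xs l (j : Fin n)) • (Pi.single j (1:ℝ) : {j : Fin n // j ≠ i} → ℝ)
                    = Pi.single j (xs l i * xs l (j : Fin n)) := by
                intro j
                rw [← Pi.single_smul, smul_eq_mul, mul_one]
              rw [Finset.sum_congr rfl (fun j _ => hsing j), Finset.univ_sum_single]
            · simp [Prod.snd_sum]
          rw [hdecomp, map_add, map_sum]
          simp only [map_smul, smul_eq_mul]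
          have he : ∑ j : {j : Fin n // j ≠ i},
              (xs l i * xs l (j : Fin n)) * f (Pi.single j 1, 0)
              = xs l i * ∑ j : {j : Fin n // j ≠ i}, f (Pi.single j 1, 0) * xs l (j : Fin n) := by
            rw [Finset.mul_sum]
            exact Finset.sum_congr rfl fun j _ => by ring
          rw [he]
          ring
        have h0 := hdirwb (fun j => -(f (Pi.single j 1, 0)))
          (-(f ((0 : {j : Fin n // j ≠ i} → ℝ), 1)))
        have e2 : ∀ l ∈ (univ : Finset (Fin m)),
            (if c l < 1 then
              -(xs l i * ((∑ j : {j : Fin n // j ≠ i},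
                (fun j => -(f (Pi.single j 1, 0))) j * xs l (j : Fin n)) -
                  -(f ((0 : {j : Fin n // j ≠ i} → ℝ), 1))))
            else if c l = 1 then
              max 0 (-(xs l i * ((∑ j : {j : Fin n // j ≠ i},
                (fun j => -(f (Pi.single j 1, 0))) j * xs l (j : Fin n)) -
                  -(f ((0 : {j : Fin n // j ≠ i} → ℝ), 1)))))
            else 0)
            = (if c l < 1 then f (fun j => xs l i * xs l (j : Fin n), -(xs l i))
              else if c l = 1 then
                max 0 (f (fun j => xs l i * xs l (j : Fin n), -(xs l i)))
              else 0) := by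
          intro l _
          have hneg : xs l i * ((∑ j : {j : Fin n // j ≠ i},
              (fun j => -(f (Pi.single j 1, 0))) j * xs l (j : Fin n)) -
                -(f ((0 : {j : Fin n // j ≠ i} → ℝ), 1)))
              = -(f (fun j => xs l i * xs l (j : Fin n), -(xs l i))) := by
            rw [frep l]
            have he : ∑ j : {j : Fin n // j ≠ i},
                (fun j => -(f (Pi.single j 1, 0))) j * xs l (j : Fin n)
                = -∑ j : {j : Fin n // j ≠ i}, f (Pi.single j 1, 0) * xs l (j : Fin n) := by
              rw [← Finset.sum_neg_distrib]
              exact Finset.sum_congr rfl fun j _ => by ring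
            rw [he]
            ring
          rw [hneg, neg_neg]
        rw [Finset.sum_congr rfl e2, split_sum] at h0
        exact h0
      obtain ⟨uu, huu01, hzero⟩ := farkas c
        (fun l => ((fun j => xs l i * xs l (j : Fin n), -(xs l i)) :
          ({j : Fin n // j ≠ i} → ℝ) × ℝ)) hdirf
      have hzero' : ∑ l, ((if c l < 1 then (1:ℝ) else if c l = 1 then uu l else 0) •
          ((fun j => xs l i * xs l (j : Fin n), -(xs l i)) :
            ({j : Fin n // j ≠ i} → ℝ) × ℝ)) = 0 := by
        have e3 : ∀ l ∈ (univ : Finset (Fin m)),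
            (if c l < 1 then (1:ℝ) else if c l = 1 then uu l else 0) •
              ((fun j => xs l i * xs l (j : Fin n), -(xs l i)) :
                ({j : Fin n // j ≠ i} → ℝ) × ℝ)
            = (if c l < 1 then
                ((fun j => xs l i * xs l (j : Fin n), -(xs l i)) :
                  ({j : Fin n // j ≠ i} → ℝ) × ℝ)
              else if c l = 1 then uu l •
                ((fun j => xs l i * xs l (j : Fin n), -(xs l i)) :
                  ({j : Fin n // j ≠ i} → ℝ) × ℝ)
              else 0) := by
          intro l _
          split_ifs <;> simp
        rw [Finset.sum_congr rfl e3, split_sum]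
        exact hzero
      refine ⟨fun l => if c l < 1 then 1 else if c l = 1 then uu l else 0,
        fun l hl => by simp only [if_neg (asymm hl), if_neg (ne_of_gt hl)],
        fun l hl => by simp only [if_pos hl],
        fun l hl => by
          simp only [if_neg ((by rw [hl]; exact lt_irrefl 1) : ¬ c l < 1), if_pos hl]
          exact huu01 l,
        ?_, ?_⟩
      · intro j hj
        have h' := congrArg (fun v : ({j : Fin n // j ≠ i} → ℝ) × ℝ => v.1 ⟨j, hj⟩) hzero'
        simp only [Prod.fst_sum, Finset.sum_apply, Prod.smul_fst, Pi.smul_apply,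
          smul_eq_mul, Prod.fst_zero, Pi.zero_apply] at h'
        exact sum_ind _ _ (fun l => hprod l j)
          ((Finset.sum_congr rfl fun l _ => mul_comm _ _).trans h')
      · have h' := congrArg (fun v : ({j : Fin n // j ≠ i} → ℝ) × ℝ => v.2) hzero'
        simp only [Prod.snd_sum, Prod.smul_snd, smul_eq_mul, Prod.snd_zero] at h'
        have h2 : ∑ l, xs l i * (if c l < 1 then (1:ℝ) else if c l = 1 then uu l else 0)
            = -∑ l, (if c l < 1 then (1:ℝ) else if c l = 1 then uu l else 0) * -(xs l i) := by
          rw [← Finset.sum_neg_distrib]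
          exact Finset.sum_congr rfl fun l _ => by ring
        exact sum_ind _ _ (fun l => hxs l i) (by rw [h2, h', neg_zero])
  · rintro ⟨u, h0, h1, h2, hj, hb⟩ w b
    -- the linear form vanishes at (w, b)
    have hz1 : ∀ j : {j : Fin n // j ≠ i}, ∑ l, (xs l i * xs l (j : Fin n)) * u l = 0 := by
      intro j
      have h' := hj j j.2
      have key : ∀ l ∈ (univ : Finset (Fin m)), (xs l i * xs l (j : Fin n)) * u l =
          (if xs l i * xs l (j : Fin n) = 1 then (1:ℝ) else 0) * u l -
          (if xs l i * xs l (j : Fin n) = -1 then (1:ℝ) else 0) * u l := by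
        intro l _
        rcases hprod l j with h'' | h'' <;> rw [h''] <;> norm_num
      rw [Finset.sum_congr rfl key, Finset.sum_sub_distrib, h', sub_self]
    have hz2 : ∑ l, xs l i * u l = 0 := by
      have key : ∀ l ∈ (univ : Finset (Fin m)), xs l i * u l =
          (if xs l i = 1 then (1:ℝ) else 0) * u l -
          (if xs l i = -1 then (1:ℝ) else 0) * u l := by
        intro l _
        rcases hxs l i with h'' | h'' <;> rw [h''] <;> norm_num
      rw [Finset.sum_congr rfl key, Finset.sum_sub_distrib, hb, sub_self]
    have hsum0 : ∑ l, u l *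
        (xs l i * ((∑ j : {j : Fin n // j ≠ i}, w j * xs l (j : Fin n)) - b)) = 0 := by
      have expand : ∀ l ∈ (univ : Finset (Fin m)), u l *
          (xs l i * ((∑ j : {j : Fin n // j ≠ i}, w j * xs l (j : Fin n)) - b)) =
          (∑ j : {j : Fin n // j ≠ i}, w j * ((xs l i * xs l (j : Fin n)) * u l)) -
            b * (xs l i * u l) := by
        intro l _
        have h' : (∑ j : {j : Fin n // j ≠ i}, w j * ((xs l i * xs l (j : Fin n)) * u l))
            = (∑ j : {j : Fin n // j ≠ i}, w j * xs l (j : Fin n)) * (xs l i * u l) := by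
          rw [Finset.sum_mul]
          exact Finset.sum_congr rfl fun j _ => by ring
        rw [h']; ring
      rw [Finset.sum_congr rfl expand, Finset.sum_sub_distrib, Finset.sum_comm]
      have h1' : ∀ j ∈ (univ : Finset {j : Fin n // j ≠ i}),
          ∑ l, w j * ((xs l i * xs l (j : Fin n)) * u l) = 0 := by
        intro j _
        rw [← Finset.mul_sum, hz1 j, mul_zero]
      have h2' : ∑ l, b * (xs l i * u l) = 0 := by
        rw [← Finset.mul_sum, hz2, mul_zero]
      rw [Finset.sum_congr rfl h1', h2', Finset.sum_const_zero, sub_zero]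
    unfold hingeObj
    apply mul_le_mul_of_nonneg_left _ (by positivity : (0:ℝ) ≤ 1 / (m:ℝ))
    have e0 : ∀ l ∈ (univ : Finset (Fin m)),
        max (c l) (1 - xs l i *
          ((∑ j : {j : Fin n // j ≠ i}, (0 : {j : Fin n // j ≠ i} → ℝ) j * xs l (j : Fin n)) - 0))
        = max (c l) 1 := by
      intro l _
      simp
    rw [Finset.sum_congr rfl e0]
    calc ∑ l, max (c l) 1
        = ∑ l, (max (c l) 1 - u l *
            (xs l i * ((∑ j : {j : Fin n // j ≠ i}, w j * xs l (j : Fin n)) - b))) := by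
          rw [Finset.sum_sub_distrib, hsum0, sub_zero]
      _ ≤ _ := Finset.sum_le_sum fun l _ => aux_key _ _ _ (h0 l) (h1 l) (h2 l)
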